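/- The disjoint complement M^d = {y ∈ X : y ⊥ x for all x ∈ M} of any subset M of a pre-Riesz space X is a linear subspace of X. -/

import Mathlib

set_option linter.unusedSectionVars false

/-- Disjointness in a partially ordered vector space. -/
def PDisj {X : Type*} [AddCommGroup X] [PartialOrder X] (x y : X) : Prop :=
  upperBounds {x + y, -x - y} = upperBounds {x - y, -x + y}

/-- The disjoint complement of a subset `M`. -/
def Dcompl {X : Type*} [AddCommGroup X] [PartialOrder X] (M : Set X) : Set X :=
  {y | ∀ x ∈ M, PDisj y x}

section Aux

variable {X : Type*} [AddCommGroup X] [PartialOrder X] [IsOrderedAddMonoid X] [Module ℝ X] [PosSMulStrictMono ℝ X] [PosSMulReflectLT ℝ X]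

private lemma mem_ub_pair {p q t : X} :
    t ∈ upperBounds ({p, q} : Set X) ↔ p ≤ t ∧ q ≤ t := by
  simp [upperBounds]

private lemma pd_oracle {a b : X} (h : PDisj a b) {t : X}
    (h1 : a + b ≤ t) (h2 : -a - b ≤ t) : a - b ≤ t ∧ -a + b ≤ t := by
  have h' : upperBounds ({a + b, -a - b} : Set X) = upperBounds {a - b, -a + b} := h
  have ht : t ∈ upperBounds ({a + b, -a - b} : Set X) := mem_ub_pair.2 ⟨h1, h2⟩
  rw [h'] at ht
  exact mem_ub_pair.1 ht

private lemma pd_of_eq {a b : X}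
    (h : upperBounds ({a + b, -a - b} : Set X) = upperBounds {a - b, -a + b}) :
    PDisj a b := h

private lemma pd_unfold {a b : X} (h : PDisj a b) :
    upperBounds ({a + b, -a - b} : Set X) = upperBounds {a - b, -a + b} := h

private lemma pd_neg_neg {a b : X} (h : PDisj a b) : PDisj (-a) (-b) := by
  apply pd_of_eq
  rw [show (-a + -b : X) = -a - b by module, show (-(-a) - -b : X) = a + b by module,
    show (-a - -b : X) = -a + b by module, show (-(-a) + -b : X) = a - b by module,
    Set.pair_comm (-a - b) (a + b), Set.pair_comm (-a + b) (a - b)]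
  exact pd_unfold h

private lemma pd_neg_right {a b : X} (h : PDisj a b) : PDisj a (-b) := by
  apply pd_of_eq
  rw [show (a + -b : X) = a - b by module, show (-a - -b : X) = -a + b by module,
    show (a - -b : X) = a + b by module, show (-a + -b : X) = -a - b by module]
  exact (pd_unfold h).symm

private lemma pd_swap {a b : X} (h : PDisj a b) : PDisj b a := by
  apply pd_of_eq
  rw [show (b + a : X) = a + b by module, show (-b - a : X) = -a - b by module,
    show (b - a : X) = -a + b by module, show (-b + a : X) = a - b by module,
    Set.pair_comm (-a + b) (a - b)]
  exact pd_unfold h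

private lemma pd_neg_left {a b : X} (h : PDisj a b) : PDisj (-a) b := by
  have h2 := pd_neg_neg (pd_neg_right h)
  rwa [neg_neg] at h2

private lemma pd_zero {x : X} : PDisj (0 : X) x := by
  apply pd_of_eq
  rw [show ((0 : X) + x : X) = x by module, show (-(0:X) - x : X) = -x by module,
    show ((0:X) - x : X) = -x by module, show (-(0:X) + x : X) = x by module,
    Set.pair_comm (-x) x]

private lemma nonneg_of_smul_nonneg {c : ℝ} {g : X} (hc : 0 < c) (h : 0 ≤ c • g) :
    0 ≤ g := by
  have h2 := smul_le_smul_of_nonneg_left h (le_of_lt (inv_pos.2 hc))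
  rwa [smul_zero, smul_smul, inv_mul_cancel₀ hc.ne', one_smul] at h2

private lemma smul_le_of_le {c : ℝ} {u v : X} (hc : 0 ≤ c) (h : u ≤ v) :
    c • u ≤ c • v := smul_le_smul_of_nonneg_left h hc

/-- Equal-scale core lemma: needs only the disjointness oracle. -/
private lemma kstar_eq {x y g : X} (hd : PDisj y x) {a : ℝ} (ha : 0 < a)
    (h1 : a • x ≤ g) (h2 : -(a • y) ≤ g) : 0 ≤ g := by
  set f := (2 / a) • g with hf
  have hpos : (0:ℝ) < 2 / a := by positivity
  have hx2 : (2:ℝ) • x ≤ f := by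
    have := smul_le_of_le hpos.le h1
    rwa [smul_smul, show (2 / a) * a = 2 by field_simp] at this
  have hy2 : -((2:ℝ) • y) ≤ f := by
    have := smul_le_of_le hpos.le h2
    rwa [smul_neg, smul_smul, show (2 / a) * a = 2 by field_simp] at this
  -- oracle applied to t := f + y - x
  have o1 : y + x ≤ f + y - x := by
    rw [← sub_nonneg, show f + y - x - (y + x) = f - (2:ℝ) • x by module, sub_nonneg]
    exact hx2
  have o2 : -y - x ≤ f + y - x := by
    rw [← sub_nonneg, show f + y - x - (-y - x) = f - -((2:ℝ) • y) by module, sub_nonneg]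
    exact hy2
  have hc := (pd_oracle hd o1 o2).1
  have hf0 : 0 ≤ f := by
    rw [← sub_nonneg] at hc ⊢
    rwa [show f + y - x - (y - x) = f - 0 by module] at hc
  exact nonneg_of_smul_nonneg hpos hf0

/-- Main amplification lemma, by induction: `y ⊥ x`, `a•x ≤ g`, `-(b•y) ≤ g`
with `0 < a ≤ b ≤ 2^n a` imply `0 ≤ g`. -/
private lemma kstar (hpr : ∀ x y z : X, upperBounds {x + y, x + z} ⊆ upperBounds {y, z} → 0 ≤ x)
    {x y : X} (hd : PDisj y x) :
    ∀ (n : ℕ) (a b : ℝ) (g : X), 0 < a → 0 < b → a ≤ b → b ≤ 2 ^ n * a →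
      a • x ≤ g → -(b • y) ≤ g → 0 ≤ g := by
  intro n
  induction n with
  | zero =>
    intro a b g ha hb hab hba hax hby
    have hba' : b ≤ a := by simpa using hba
    have : a = b := le_antisymm hab hba'
    subst this
    exact kstar_eq hd ha hax hby
  | succ n ih =>
    intro a b g ha hb hab hba hax hby
    by_cases hc : b ≤ 2 ^ n * a
    · exact ih a b g ha hb hab hc hax hby
    · apply hpr g (a • x) 0
      intro f hf
      obtain ⟨hf1, hf2⟩ := mem_ub_pair.1 hf
      have hgf : g ≤ f := by rwa [add_zero] at hf2
      have haf : a • x ≤ f := hax.trans hgf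
      have hbf : -(b • y) ≤ f := hby.trans hgf
      have h2a : (2 * a) • x ≤ f := by
        calc (2 * a) • x = a • x + a • x := by module
          _ ≤ g + a • x := add_le_add_left hax _
          _ ≤ f := hf1
      set a2 := min (2 * a) b with ha2def
      have ha2pos : 0 < a2 := lt_min (by linarith) hb
      have ha2le : a2 ≤ b := min_le_right _ _
      have haa2 : a ≤ a2 := le_min (by linarith) hab
      have ha22a : a2 ≤ 2 * a := min_le_left _ _
      -- convex combination: a2 • x ≤ f
      have ht0 : 0 ≤ (a2 - a) / a := div_nonneg (by linarith) ha.le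
      have ht1 : (a2 - a) / a ≤ 1 := by
        rw [div_le_one ha]; linarith
      have ha2f : a2 • x ≤ f := by
        have e : a2 • x = ((a2 - a) / a) • ((2 * a) • x) + (1 - (a2 - a) / a) • (a • x) := by
          rw [smul_smul, smul_smul, ← add_smul]
          congr 1
          field_simp
          ring
        rw [e]
        calc ((a2 - a) / a) • ((2 * a) • x) + (1 - (a2 - a) / a) • (a • x)
            ≤ ((a2 - a) / a) • f + (1 - (a2 - a) / a) • f :=
              add_le_add (smul_le_of_le ht0 h2a) (smul_le_of_le (by linarith) haf)
          _ = f := by rw [← add_smul]; norm_num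
      have hb2 : b ≤ 2 ^ n * a2 := by
        rcases le_or_gt (2 * a) b with h' | h'
        · rw [ha2def, min_eq_left h']
          calc b ≤ 2 ^ (n + 1) * a := hba
            _ = 2 ^ n * (2 * a) := by ring
        · rw [ha2def, min_eq_right h'.le]
          have h1n : (1:ℝ) ≤ 2 ^ n := one_le_pow₀ (by norm_num)
          nlinarith
      have hf0 : 0 ≤ f := ih a2 b f ha2pos hb ha2le hb2 ha2f hbf
      exact mem_ub_pair.2 ⟨haf, hf0⟩

private lemma kstar' (hpr : ∀ x y z : X, upperBounds {x + y, x + z} ⊆ upperBounds {y, z} → 0 ≤ x)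
    {x y g : X} (hd : PDisj y x) {a b : ℝ} (ha : 0 < a) (hb : 0 < b)
    (h1 : a • x ≤ g) (h2 : -(b • y) ≤ g) : 0 ≤ g := by
  have arch : ∀ u v : ℝ, 0 < u → 0 < v → ∃ n : ℕ, v ≤ 2 ^ n * u := by
    intro u v hu hv
    obtain ⟨n, hn⟩ := pow_unbounded_of_one_lt (v / u) (by norm_num : (1:ℝ) < 2)
    exact ⟨n, by rw [div_lt_iff₀ hu] at hn; linarith [hn]⟩
  rcases le_total a b with hab | hab
  · obtain ⟨n, hn⟩ := arch a b ha hb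
    exact kstar hpr hd n a b g ha hb hab hn h1 h2
  · obtain ⟨n, hn⟩ := arch b a hb ha
    have hd' : PDisj (-x) (-y) := pd_neg_neg (pd_swap hd)
    refine kstar hpr hd' n b a g hb ha hab hn ?_ ?_
    · rwa [smul_neg]
    · rwa [smul_neg, neg_neg]

/-- Core of scalar closure. -/
private lemma main_smul (hpr : ∀ x y z : X, upperBounds {x + y, x + z} ⊆ upperBounds {y, z} → 0 ≤ x)
    {x y : X} (hd : PDisj y x) {c : ℝ} (hc : 0 < c) {h : X}
    (h1 : c • y + x ≤ h) (h2 : -(c • y) - x ≤ h) : c • y - x ≤ h := by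
  rw [← sub_nonneg]
  apply kstar' hpr hd (a := 2) (b := 2 * c) two_pos (by linarith)
  · rw [← sub_nonneg, show h - (c • y - x) - (2:ℝ) • x = h - (c • y + x) by module,
      sub_nonneg]
    exact h1
  · rw [← sub_nonneg, show h - (c • y - x) - -((2 * c) • y) = h - (-(c • y) - x) by module,
      sub_nonneg]
    exact h2

private lemma pd_smul_pos (hpr : ∀ x y z : X, upperBounds {x + y, x + z} ⊆ upperBounds {y, z} → 0 ≤ x)
    {x y : X} (hd : PDisj y x) {c : ℝ} (hc : 0 < c) : PDisj (c • y) x := by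
  apply pd_of_eq
  ext t
  rw [mem_ub_pair, mem_ub_pair]
  constructor
  · rintro ⟨u1, u2⟩
    constructor
    · exact main_smul hpr hd hc u1 u2
    · -- -(c•y) + x ≤ t, via pair (-y, -x)
      have hd2 : PDisj (-y) (-x) := pd_neg_neg hd
      have w := main_smul hpr hd2 hc (h := t) ?_ ?_
      · rw [show (c • -y - -x : X) = -(c • y) + x by module] at w
        exact w
      · rw [show (c • -y + -x : X) = -(c • y) - x by module]
        exact u2
      · rw [show (-(c • -y) - -x : X) = c • y + x by module]
        exact u1
  · rintro ⟨v1, v2⟩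
    constructor
    · -- c•y + x ≤ t, via pair (y, -x)
      have hd2 : PDisj y (-x) := pd_neg_right hd
      have w := main_smul hpr hd2 hc (h := t) ?_ ?_
      · rw [show (c • y - -x : X) = c • y + x by module] at w
        exact w
      · rw [show (c • y + -x : X) = c • y - x by module]
        exact v1
      · rw [show (-(c • y) - -x : X) = -(c • y) + x by module]
        exact v2
    · -- -(c•y) - x ≤ t, via pair (-y, x)
      have hd2 : PDisj (-y) x := pd_neg_left hd
      have w := main_smul hpr hd2 hc (h := t) ?_ ?_
      · rw [show (c • -y - x : X) = -(c • y) - x by module] at w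
        exact w
      · rw [show (c • -y + x : X) = -(c • y) + x by module]
        exact v2
      · rw [show (-(c • -y) - x : X) = c • y - x by module]
        exact v1

/-- Two-variable key lemma for additivity. -/
private lemma k2 (hpr : ∀ x y z : X, upperBounds {x + y, x + z} ⊆ upperBounds {y, z} → 0 ≤ x)
    {x y1 y2 g : X} (hd1 : PDisj y1 x) (hd2 : PDisj y2 x)
    (h1 : (2:ℝ) • x ≤ g) (h2 : -((2:ℝ) • y1) - (2:ℝ) • y2 ≤ g) : 0 ≤ g := by
  apply hpr g 0 (-((2:ℝ) • y2))
  intro f hf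
  obtain ⟨m1, m2⟩ := mem_ub_pair.1 hf
  have hgf : g ≤ f := by rwa [add_zero] at m1
  have N1 : (2:ℝ) • x ≤ f := h1.trans hgf
  have N2 : -((2:ℝ) • y1) - (2:ℝ) • y2 ≤ f := h2.trans hgf
  have N3 : (2:ℝ) • x - (2:ℝ) • y2 ≤ f := by
    calc (2:ℝ) • x - (2:ℝ) • y2 = (2:ℝ) • x + -((2:ℝ) • y2) := by module
      _ ≤ g + -((2:ℝ) • y2) := add_le_add_left h1 _
      _ ≤ f := m2
  -- oracle with pair (y1, x) on t1 := f - x + y1 + 2•y2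
  have o1 : y1 + x ≤ f - x + y1 + (2:ℝ) • y2 := by
    rw [← sub_nonneg, show f - x + y1 + (2:ℝ) • y2 - (y1 + x)
      = f - ((2:ℝ) • x - (2:ℝ) • y2) by module, sub_nonneg]
    exact N3
  have o2 : -y1 - x ≤ f - x + y1 + (2:ℝ) • y2 := by
    rw [← sub_nonneg, show f - x + y1 + (2:ℝ) • y2 - (-y1 - x)
      = f - (-((2:ℝ) • y1) - (2:ℝ) • y2) by module, sub_nonneg]
    exact N2
  have c1 := (pd_oracle hd1 o1 o2).1
  have N5 : -((2:ℝ) • y2) ≤ f := by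
    rw [← sub_nonneg] at c1 ⊢
    rwa [show f - x + y1 + (2:ℝ) • y2 - (y1 - x) = f - -((2:ℝ) • y2) by module] at c1
  -- oracle with pair (y2, x) on t2 := f - x + y2
  have o3 : y2 + x ≤ f - x + y2 := by
    rw [← sub_nonneg, show f - x + y2 - (y2 + x) = f - (2:ℝ) • x by module, sub_nonneg]
    exact N1
  have o4 : -y2 - x ≤ f - x + y2 := by
    rw [← sub_nonneg, show f - x + y2 - (-y2 - x) = f - -((2:ℝ) • y2) by module, sub_nonneg]
    exact N5
  have d1 := (pd_oracle hd2 o3 o4).1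
  have hf0 : (0:X) ≤ f := by
    rw [← sub_nonneg] at d1 ⊢
    rwa [show f - x + y2 - (y2 - x) = f - 0 by module] at d1
  exact mem_ub_pair.2 ⟨hf0, N5⟩

/-- Core of additivity. -/
private lemma main_add (hpr : ∀ x y z : X, upperBounds {x + y, x + z} ⊆ upperBounds {y, z} → 0 ≤ x)
    {x y1 y2 : X} (hd1 : PDisj y1 x) (hd2 : PDisj y2 x) {h : X}
    (h1 : y1 + y2 + x ≤ h) (h2 : -(y1 + y2) - x ≤ h) : y1 + y2 - x ≤ h := by
  rw [← sub_nonneg]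
  apply k2 hpr hd1 hd2
  · rw [← sub_nonneg, show h - (y1 + y2 - x) - (2:ℝ) • x = h - (y1 + y2 + x) by module,
      sub_nonneg]
    exact h1
  · rw [← sub_nonneg, show h - (y1 + y2 - x) - (-((2:ℝ) • y1) - (2:ℝ) • y2)
      = h - (-(y1 + y2) - x) by module, sub_nonneg]
    exact h2

private lemma pd_add (hpr : ∀ x y z : X, upperBounds {x + y, x + z} ⊆ upperBounds {y, z} → 0 ≤ x)
    {x y1 y2 : X} (hd1 : PDisj y1 x) (hd2 : PDisj y2 x) : PDisj (y1 + y2) x := by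
  apply pd_of_eq
  ext t
  rw [mem_ub_pair, mem_ub_pair]
  constructor
  · rintro ⟨u1, u2⟩
    constructor
    · -- (y1+y2) - x ≤ t
      have w := main_add hpr hd1 hd2 (h := t) u1 ?_
      · exact w
      · rw [show (-(y1 + y2) - x : X) = -(y1 + y2) - x by module]
        exact u2
    · -- -(y1+y2) + x ≤ t via (-y1, -y2, -x)
      have w := main_add hpr (pd_neg_neg hd1) (pd_neg_neg hd2) (h := t) ?_ ?_
      · rw [show (-y1 + -y2 - -x : X) = -(y1 + y2) + x by module] at w
        exact w
      · rw [show (-y1 + -y2 + -x : X) = -(y1 + y2) - x by module]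
        exact u2
      · rw [show (-(-y1 + -y2) - -x : X) = y1 + y2 + x by module]
        exact u1
  · rintro ⟨v1, v2⟩
    constructor
    · -- (y1+y2) + x ≤ t via (y1, y2, -x)
      have w := main_add hpr (pd_neg_right hd1) (pd_neg_right hd2) (h := t) ?_ ?_
      · rw [show (y1 + y2 - -x : X) = y1 + y2 + x by module] at w
        exact w
      · rw [show (y1 + y2 + -x : X) = y1 + y2 - x by module]
        exact v1
      · rw [show (-(y1 + y2) - -x : X) = -(y1 + y2) + x by module]
        exact v2
    · -- -(y1+y2) - x ≤ t via (-y1, -y2, x)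
      have w := main_add hpr (pd_neg_left hd1) (pd_neg_left hd2) (h := t) ?_ ?_
      · rw [show (-y1 + -y2 - x : X) = -(y1 + y2) - x by module] at w
        exact w
      · rw [show (-y1 + -y2 + x : X) = -(y1 + y2) + x by module]
        exact v2
      · rw [show (-(-y1 + -y2) - x : X) = y1 + y2 - x by module]
        exact v1

end Aux

/-- In a pre-Riesz space, the disjoint complement of any set is a linear subspace. -/
theorem stmt3 {X : Type*} [AddCommGroup X] [PartialOrder X] [IsOrderedAddMonoid X] [Module ℝ X] [PosSMulStrictMono ℝ X] [PosSMulReflectLT ℝ X]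
    (hpr : ∀ x y z : X, upperBounds {x + y, x + z} ⊆ upperBounds {y, z} → 0 ≤ x)
    (M : Set X) :
    (0 : X) ∈ Dcompl M ∧
    (∀ y₁ y₂ : X, y₁ ∈ Dcompl M → y₂ ∈ Dcompl M → y₁ + y₂ ∈ Dcompl M) ∧
    (∀ (c : ℝ) (y : X), y ∈ Dcompl M → c • y ∈ Dcompl M) := by
  refine ⟨?_, ?_, ?_⟩
  · intro x hx
    exact pd_zero
  · intro y1 y2 hy1 hy2 x hx
    exact pd_add hpr (hy1 x hx) (hy2 x hx)
  · intro c y hy x hx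
    rcases lt_trichotomy c 0 with hc | hc | hc
    · have hd : PDisj (-y) x := pd_neg_left (hy x hx)
      have w := pd_smul_pos hpr hd (neg_pos.2 hc)
      rwa [show (-c) • (-y) = c • y by module] at w
    · rw [hc, zero_smul]
      exact pd_zero
    · exact pd_smul_pos hpr (hy x hx) hc
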